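/- In the 2-layered drawing of K_{m,n} with the parts on two horizontal lines y = 0 and y = H, any two crossing edges form crossing angles whose acute angle is strictly larger than some angle between two edges sharing an endpoint; hence the crossing resolution of any 2-layered straight-line drawing of a bipartite graph is at least its angular resolution. -/

import Mathlib

open Real EuclideanGeometry RealInnerProductSpace

/-- If `p` and `r` lie on the horizontal line `y = a`, `q` on `y = b` with `a ≠ b`, and
`p ≠ r`, then the angle `∠ p q r` is strictly positive. -/
lemma angle_pos_of_two_lines {a b : ℝ} (hab : a ≠ b) (p q r : EuclideanSpace ℝ (Fin 2))
    (hp : p 1 = a) (hq : q 1 = b) (hr : r 1 = a) (hpr : p ≠ r) : 0 < ∠ p q r := by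
  rcases (EuclideanGeometry.angle_nonneg p q r).lt_or_eq with h | h
  · exact h
  exfalso
  rw [eq_comm] at h
  rw [EuclideanGeometry.angle, InnerProductGeometry.angle_eq_zero_iff] at h
  obtain ⟨hne, s, hs, hsr⟩ := h
  have h1 : r 1 - q 1 = s * (p 1 - q 1) := by
    have := congrFun (congrArg (fun x : EuclideanSpace ℝ (Fin 2) => (x : Fin 2 → ℝ)) hsr) 1
    simpa [vsub_eq_sub, PiLp.sub_apply, PiLp.smul_apply, smul_eq_mul] using this
  rw [hp, hq, hr] at h1
  have hs1 : s = 1 := by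
    have : (s - 1) * (a - b) = 0 := by ring_nf; ring_nf at h1; linarith
    rcases mul_eq_zero.1 this with h' | h'
    · linarith
    · exact absurd (by linarith [sub_eq_zero.1 h']) hab
  apply hpr
  rw [hs1, one_smul] at hsr
  have h2 : r -ᵥ q = p -ᵥ q := hsr
  have h3 := congrArg (fun v : EuclideanSpace ℝ (Fin 2) => v +ᵥ q) h2
  simpa using h3.symm

lemma key_aux {H x y : ℝ} (h1 : -H ≤ x) (h2 : x ≤ H) (h3 : -H ≤ y) (h4 : y ≤ H) :
    0 ≤ x * y + H * H := by nlinarith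

lemma inner_two (x y : EuclideanSpace ℝ (Fin 2)) : ⟪x, y⟫ = x 0 * y 0 + x 1 * y 1 := by
  simp [PiLp.inner_apply, Fin.sum_univ_two, RCLike.inner_apply, mul_comm]

lemma vsub_coord (p q : EuclideanSpace ℝ (Fin 2)) (i : Fin 2) : (p -ᵥ q) i = p i - q i := rfl

lemma angle_le_pi_div_two_of_inner_nonneg (p q r : EuclideanSpace ℝ (Fin 2))
    (h : 0 ≤ ⟪p -ᵥ q, r -ᵥ q⟫) : ∠ p q r ≤ π / 2 := by
  rw [EuclideanGeometry.angle, InnerProductGeometry.angle]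
  exact Real.arccos_le_pi_div_two.2 (div_nonneg h
    (mul_nonneg (norm_nonneg _) (norm_nonneg _)))

/-- In the 2-layered drawing of `K_{m,n}` with the parts on the horizontal lines `y = 0` and
`y = H` (and within a square of side `H`, as in the construction), if the edges `u₁v₂` and
`u₂v₁` cross at `c`, then the crossing angle `∠ v₁ c v₂` equals the sum of the two vertex
angles `∠ v₁ u₂ v₂` and `∠ u₁ v₂ u₂`, and the acute angle at the crossing (the minimum of the
two supplementary crossing angles) is strictly larger than some angle between two edges
sharing an endpoint; hence the crossing resolution is at least the angular resolution. -/
theorem two_layered_crossing_ge_angular (H : ℝ) (hH : 0 < H)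
    (u₁ u₂ v₁ v₂ c : EuclideanSpace ℝ (Fin 2))
    (hu₁y : u₁ 1 = 0) (hu₂y : u₂ 1 = 0) (hv₁y : v₁ 1 = H) (hv₂y : v₂ 1 = H)
    (hu₁x : u₁ 0 ∈ Set.Icc 0 H) (hu₂x : u₂ 0 ∈ Set.Icc 0 H)
    (hv₁x : v₁ 0 ∈ Set.Icc 0 H) (hv₂x : v₂ 0 ∈ Set.Icc 0 H)
    (hu : u₁ ≠ u₂) (hv : v₁ ≠ v₂)
    (hc₁ : c ∈ openSegment ℝ u₁ v₂) (hc₂ : c ∈ openSegment ℝ u₂ v₁) :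
    ∠ v₁ c v₂ = ∠ v₁ u₂ v₂ + ∠ u₁ v₂ u₂ ∧
    min (∠ v₁ c v₂) (∠ v₁ c u₁) >
      min (min (∠ v₁ u₂ v₂) (∠ u₁ v₂ u₂)) (min (∠ v₂ u₁ v₁) (∠ u₂ v₁ u₁)) := by
  obtain ⟨a₂, b₂, ha₂, hb₂, hab₂, hcp₂⟩ := hc₂
  obtain ⟨a₁, b₁, ha₁, hb₁, hab₁, hcp₁⟩ := hc₁
  have hcoord₂ : ∀ i, c i = a₂ * u₂ i + b₂ * v₁ i := fun i => by
    have := congrFun (congrArg (fun x : EuclideanSpace ℝ (Fin 2) => (x : Fin 2 → ℝ)) hcp₂) i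
    simpa [PiLp.add_apply, PiLp.smul_apply, smul_eq_mul] using this.symm
  have hcoord₁ : ∀ i, c i = a₁ * u₁ i + b₁ * v₂ i := fun i => by
    have := congrFun (congrArg (fun x : EuclideanSpace ℝ (Fin 2) => (x : Fin 2 → ℝ)) hcp₁) i
    simpa [PiLp.add_apply, PiLp.smul_apply, smul_eq_mul] using this.symm
  have hcy2 : c 1 = b₂ * H := by rw [hcoord₂ 1, hu₂y, hv₁y]; ring
  have hcy1 : c 1 = b₁ * H := by rw [hcoord₁ 1, hu₁y, hv₂y]; ring
  have hb₁₂ : b₁ = b₂ := by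
    have : b₁ * H = b₂ * H := by rw [← hcy1, hcy2]
    exact mul_right_cancel₀ (ne_of_gt hH) this
  have hcy : 0 < c 1 ∧ c 1 < H := by
    constructor
    · rw [hcy2]; positivity
    · rw [hcy2]; nlinarith
  have hcu₁ : c ≠ u₁ := fun h => by rw [h, hu₁y] at hcy; exact lt_irrefl 0 hcy.1
  have hcu₂ : c ≠ u₂ := fun h => by rw [h, hu₂y] at hcy; exact lt_irrefl 0 hcy.1
  have hcv₁ : c ≠ v₁ := fun h => by rw [h, hv₁y] at hcy; exact lt_irrefl H hcy.2
  have hcv₂ : c ≠ v₂ := fun h => by rw [h, hv₂y] at hcy; exact lt_irrefl H hcy.2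
  have hs₁ : Sbtw ℝ u₁ c v₂ :=
    ⟨(mem_segment_iff_wbtw (R := ℝ)).1
      (openSegment_subset_segment ℝ _ _ ⟨a₁, b₁, ha₁, hb₁, hab₁, hcp₁⟩), hcu₁, hcv₂⟩
  have hs₂ : Sbtw ℝ u₂ c v₁ :=
    ⟨(mem_segment_iff_wbtw (R := ℝ)).1
      (openSegment_subset_segment ℝ _ _ ⟨a₂, b₂, ha₂, hb₂, hab₂, hcp₂⟩), hcu₂, hcv₁⟩
  have h1pi : ∠ u₁ c v₂ = π := hs₁.angle₁₂₃_eq_pi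
  have h2pi : ∠ u₂ c v₁ = π := hs₂.angle₁₂₃_eq_pi
  have h1pi' : ∠ v₂ c u₁ = π := hs₁.angle₃₂₁_eq_pi
  set A := ∠ v₁ u₂ v₂ with hA
  set B := ∠ u₁ v₂ u₂ with hB
  set C := ∠ v₂ u₁ v₁ with hC
  set D := ∠ u₂ v₁ u₁ with hD
  -- first equality: exterior angle of triangle u₂ c v₂ at c
  have tri₁ : ∠ c u₂ v₂ + ∠ u₂ v₂ c + ∠ v₂ c u₂ = π :=
    EuclideanGeometry.angle_add_angle_add_angle_eq_pi v₂ (Ne.symm hcu₂)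
  have e₁ : ∠ v₂ u₂ c = ∠ v₂ u₂ v₁ := EuclideanGeometry.angle_eq_angle_of_angle_eq_pi v₂ h2pi
  have e₂ : ∠ u₂ v₂ c = ∠ u₂ v₂ u₁ := EuclideanGeometry.angle_eq_angle_of_angle_eq_pi u₂ h1pi'
  have sup₁ : ∠ v₂ c u₂ + ∠ v₂ c v₁ = π :=
    EuclideanGeometry.angle_add_angle_eq_pi_of_angle_eq_pi v₂ h2pi
  have eq1 : ∠ v₁ c v₂ = A + B := by
    have c1 : ∠ c u₂ v₂ = A := by
      rw [EuclideanGeometry.angle_comm c u₂ v₂, e₁, hA, EuclideanGeometry.angle_comm]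
    have c2 : ∠ u₂ v₂ c = B := by
      rw [e₂, hB, EuclideanGeometry.angle_comm]
    have c3 : ∠ v₁ c v₂ = ∠ v₂ c v₁ := EuclideanGeometry.angle_comm v₁ c v₂
    linarith
  -- the supplementary crossing angle
  have sup₂ : ∠ v₁ c u₁ + ∠ v₁ c v₂ = π :=
    EuclideanGeometry.angle_add_angle_eq_pi_of_angle_eq_pi v₁ h1pi
  -- the crossing angle ∠ v₁ c v₂ is at most π/2 thanks to the square constraints
  have hle : ∠ v₁ c v₂ ≤ π / 2 := by
    have hb₂' : b₂ = 1 - a₂ := by linarith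
    have hb₁' : b₁ = 1 - a₁ := by linarith
    have ha₁₂ : a₁ = a₂ := by linarith
    apply angle_le_pi_div_two_of_inner_nonneg
    rw [inner_two, vsub_coord, vsub_coord, vsub_coord, vsub_coord]
    have hw₁0 : v₁ 0 - c 0 = a₂ * (v₁ 0 - u₂ 0) := by
      rw [hcoord₂ 0, hb₂']; ring
    have hw₁1 : v₁ 1 - c 1 = a₂ * H := by rw [hv₁y, hcy2, hb₂']; ring
    have hw₂0 : v₂ 0 - c 0 = a₂ * (v₂ 0 - u₁ 0) := by
      rw [hcoord₁ 0, hb₁', ha₁₂]; ring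
    have hw₂1 : v₂ 1 - c 1 = a₂ * H := by rw [hv₂y, hcy1, hb₁', ha₁₂]; ring
    rw [hw₁0, hw₁1, hw₂0, hw₂1]
    have key : 0 ≤ (v₁ 0 - u₂ 0) * (v₂ 0 - u₁ 0) + H * H := by
      refine key_aux ?_ ?_ ?_ ?_
      · obtain ⟨g1, g2⟩ := hv₁x; obtain ⟨g3, g4⟩ := hu₂x; linarith
      · obtain ⟨g1, g2⟩ := hv₁x; obtain ⟨g3, g4⟩ := hu₂x; linarith
      · obtain ⟨g1, g2⟩ := hv₂x; obtain ⟨g3, g4⟩ := hu₁x; linarith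
      · obtain ⟨g1, g2⟩ := hv₂x; obtain ⟨g3, g4⟩ := hu₁x; linarith
    calc (0:ℝ) ≤ a₂ * a₂ * ((v₁ 0 - u₂ 0) * (v₂ 0 - u₁ 0) + H * H) :=
          mul_nonneg (mul_nonneg ha₂.le ha₂.le) key
      _ = a₂ * (v₁ 0 - u₂ 0) * (a₂ * (v₂ 0 - u₁ 0)) + a₂ * H * (a₂ * H) := by ring
  -- positivity of the four base angles
  have hApos : 0 < A :=
    angle_pos_of_two_lines (by linarith : H ≠ (0 : ℝ)) v₁ u₂ v₂ hv₁y hu₂y hv₂y hv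
  have hBpos : 0 < B :=
    angle_pos_of_two_lines (by linarith : (0 : ℝ) ≠ H) u₁ v₂ u₂ hu₁y hv₂y hu₂y hu
  have hCpos : 0 < C :=
    angle_pos_of_two_lines (by linarith : H ≠ (0 : ℝ)) v₂ u₁ v₁ hv₂y hu₁y hv₁y (Ne.symm hv)
  have hDpos : 0 < D :=
    angle_pos_of_two_lines (by linarith : (0 : ℝ) ≠ H) u₂ v₁ u₁ hu₂y hv₁y hu₁y (Ne.symm hu)
  refine ⟨eq1, lt_min ?_ ?_⟩
  · have h1 : min (min A B) (min C D) ≤ min A B := min_le_left _ _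
    have h2 : min A B ≤ A := min_le_left _ _
    have h3 : min A B < A + B := by linarith
    linarith
  · have h1 : min (min A B) (min C D) ≤ min A B := min_le_left _ _
    have h2 : min A B ≤ A := min_le_left _ _
    have h4 : min (min A B) (min C D) < A + B := by linarith
    have h5 : ∠ v₁ c u₁ = π - (A + B) := by linarith
    have h6 : A + B ≤ π / 2 := by linarith
    linarith
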